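/- Let C be a subset of a W-hyperbolic space X and T:C→C a λ-firmly nonexpansive mapping for some λ ∈ (0,1). Then for all x ∈ C and all k ≥ 1, lim_{n→∞} d(T^{n+1}x, T^n x) = (1/k) lim_{n→∞} d(T^{n+k}x, T^n x) = lim_{n→∞} d(T^n x, x)/n = r_C(T), where r_C(T) = inf{d(y,Ty) : y ∈ C} is the minimal displacement of T. -/

import Mathlib

open Metric Set

/-- A geodesic segment in a metric space joining `x` and `y`: the image of an
isometric embedding of a real interval sending the endpoints to `x` and `y`. -/
def IsGeodesicSegment {X : Type*} [MetricSpace X] (S : Set X) (x y : X) : Prop :=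
  ∃ (a b : ℝ) (γ : ℝ → X), a ≤ b ∧ γ a = x ∧ γ b = y ∧
    (∀ s ∈ Set.Icc a b, ∀ t ∈ Set.Icc a b, dist (γ s) (γ t) = |s - t|) ∧
    S = γ '' Set.Icc a b

/-- A metric space is geodesic if every two points are joined by a geodesic segment. -/
def GeodesicSpace (X : Type*) [MetricSpace X] : Prop :=
  ∀ x y : X, ∃ S : Set X, IsGeodesicSegment S x y

/-- `(X,d,W)` is a W-hyperbolic space: the convexity mapping `W` satisfies
axioms (W1)-(W4) for all parameters in `[0,1]`. -/
def IsWHyperbolic {X : Type*} [MetricSpace X] (W : X → X → ℝ → X) : Prop :=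
  (∀ x y z : X, ∀ l ∈ Set.Icc (0:ℝ) 1,
      dist z (W x y l) ≤ (1 - l) * dist z x + l * dist z y) ∧
  (∀ x y : X, ∀ l ∈ Set.Icc (0:ℝ) 1, ∀ l' ∈ Set.Icc (0:ℝ) 1,
      dist (W x y l) (W x y l') = |l - l'| * dist x y) ∧
  (∀ x y : X, ∀ l ∈ Set.Icc (0:ℝ) 1, W x y l = W y x (1 - l)) ∧
  (∀ x y z w : X, ∀ l ∈ Set.Icc (0:ℝ) 1,
      dist (W x z l) (W y w l) ≤ (1 - l) * dist x y + l * dist z w)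

theorem stmt17 {X : Type*} [MetricSpace X] (W : X → X → ℝ → X)
    (hW : IsWHyperbolic W) (C : Set X) (hne : C.Nonempty)
    (T : X → X) (hTC : Set.MapsTo T C C)
    (l : ℝ) (hl : l ∈ Set.Ioo (0:ℝ) 1)
    (hT : ∀ x ∈ C, ∀ y ∈ C, dist (T x) (T y) ≤ dist (W x (T x) l) (W y (T y) l)) :
    -- `r` is the minimal displacement `r_C(T) = inf {d(y,Ty) : y ∈ C}`
    ∀ x ∈ C, ∀ k : ℕ, 1 ≤ k →
      Filter.Tendsto (fun n : ℕ => dist (T^[n + 1] x) (T^[n] x)) Filter.atTop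
        (nhds (sInf {d : ℝ | ∃ y ∈ C, d = dist y (T y)})) ∧
      Filter.Tendsto (fun n : ℕ => (1 / (k : ℝ)) * dist (T^[n + k] x) (T^[n] x))
        Filter.atTop (nhds (sInf {d : ℝ | ∃ y ∈ C, d = dist y (T y)})) ∧
      Filter.Tendsto (fun n : ℕ => dist (T^[n] x) x / (n : ℝ)) Filter.atTop
        (nhds (sInf {d : ℝ | ∃ y ∈ C, d = dist y (T y)})) := by
  obtain ⟨hW1, _hW2, _hW3, hW4⟩ := hW
  obtain ⟨hl0, hl1⟩ := hl
  have hlI : l ∈ Set.Icc (0:ℝ) 1 := ⟨hl0.le, hl1.le⟩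
  have hl1' : (0:ℝ) < 1 - l := by linarith
  -- T is nonexpansive on C
  have hne' : ∀ u ∈ C, ∀ v ∈ C, dist (T u) (T v) ≤ dist u v := by
    intro u hu v hv
    have h1 := hT u hu v hv
    have h2 := hW4 u v (T u) (T v) l hlI
    have hpre : (1 - l) * dist (T u) (T v) ≤ (1 - l) * dist u v := by nlinarith
    exact (mul_le_mul_iff_right₀ hl1').mp hpre
  -- iterated nonexpansiveness
  have hneI : ∀ n : ℕ, ∀ u ∈ C, ∀ v ∈ C, dist (T^[n] u) (T^[n] v) ≤ dist u v := by
    intro n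
    induction n with
    | zero => intro u _ v _; simp
    | succ n ih =>
      intro u hu v hv
      rw [Function.iterate_succ_apply' T n u, Function.iterate_succ_apply' T n v]
      exact (hne' _ ((hTC.iterate n) hu) _ ((hTC.iterate n) hv)).trans (ih u hu v hv)
  -- key inequality from λ-firm nonexpansiveness
  have hB : ∀ u ∈ C, ∀ v ∈ C,
      (1 + l) * dist (T u) (T v) ≤
        (1 - l) * dist u v + l * (dist (T u) v + dist u (T v)) := by
    intro u hu v hv
    have h1 := hT u hu v hv
    have h2 := hW1 v (T v) (W u (T u) l) l hlI
    have h3 : dist (W u (T u) l) v ≤ (1 - l) * dist u v + l * dist (T u) v := by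
      have h := hW1 u (T u) v l hlI
      rwa [dist_comm v (W u (T u) l), dist_comm v u, dist_comm v (T u)] at h
    have h4 : dist (W u (T u) l) (T v) ≤ (1 - l) * dist u (T v) + l * dist (T u) (T v) := by
      have h := hW1 u (T u) (T v) l hlI
      rwa [dist_comm (T v) (W u (T u) l), dist_comm (T v) u, dist_comm (T v) (T u)] at h
    have h6 := mul_le_mul_of_nonneg_left h3 hl1'.le
    have h7 := mul_le_mul_of_nonneg_left h4 hl0.le
    have hpre : (1 - l) * ((1 + l) * dist (T u) (T v)) ≤
        (1 - l) * ((1 - l) * dist u v + l * (dist (T u) v + dist u (T v))) := by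
      nlinarith
    exact (mul_le_mul_iff_right₀ hl1').mp hpre
  intro x hx k hk
  set S := {d : ℝ | ∃ y ∈ C, d = dist y (T y)} with hS
  have hxC : ∀ n : ℕ, T^[n] x ∈ C := fun n => (hTC.iterate n) hx
  set D : ℕ → ℕ → ℝ := fun j n => dist (T^[n + j] x) (T^[n] x) with hD
  have hDnn : ∀ j n, 0 ≤ D j n := fun j n => dist_nonneg
  have hstep : ∀ j n, D j (n + 1) ≤ D j n := by
    intro j n
    simp only [hD]
    have e1 : T^[n + 1 + j] x = T (T^[n + j] x) := by
      rw [show n + 1 + j = (n + j) + 1 by omega, Function.iterate_succ_apply']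
    have e2 : T^[n + 1] x = T (T^[n] x) := Function.iterate_succ_apply' T n x
    rw [e1, e2]
    exact hne' _ (hxC (n + j)) _ (hxC n)
  have hDanti : ∀ j, Antitone (D j) := fun j => antitone_nat_of_succ_le (hstep j)
  set L : ℕ → ℝ := fun j => ⨅ n, D j n with hL
  have hDL : ∀ j, Filter.Tendsto (D j) Filter.atTop (nhds (L j)) := by
    intro j
    exact tendsto_atTop_ciInf (hDanti j) ⟨0, by rintro y ⟨n, rfl⟩; exact dist_nonneg⟩
  have hDL1 : ∀ j, Filter.Tendsto (fun n => D j (n + 1)) Filter.atTop (nhds (L j)) :=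
    fun j => (hDL j).comp (Filter.tendsto_add_atTop_nat 1)
  have hL0 : L 0 = 0 := by
    have h : ∀ n, D 0 n = 0 := fun n => by simp [hD]
    simp only [hL]
    simp [h]
  -- subadditivity in k
  have hCsub : ∀ j, L (j + 1) ≤ L j + L 1 := by
    intro j
    refine le_of_tendsto_of_tendsto' (hDL (j + 1)) ((hDL1 j).add (hDL 1)) (fun n => ?_)
    simp only [hD]
    rw [show n + 1 + j = n + (j + 1) by omega]
    exact dist_triangle _ _ _
  -- convexity in k
  have hconv : ∀ j, 2 * L (j + 1) ≤ L (j + 2) + L j := by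
    intro j
    have key : ∀ n, (1 + l) * D (j + 1) (n + 1) ≤
        (1 - l) * D (j + 1) n + l * (D (j + 2) n + D j (n + 1)) := by
      intro n
      have h := hB _ (hxC (n + (j + 1))) _ (hxC n)
      have e1 : T (T^[n + (j + 1)] x) = T^[n + (j + 1) + 1] x :=
        (Function.iterate_succ_apply' T _ x).symm
      have e2 : T (T^[n] x) = T^[n + 1] x := (Function.iterate_succ_apply' T n x).symm
      rw [e1, e2] at h
      simp only [hD]
      rw [show n + 1 + (j + 1) = n + (j + 1) + 1 by omega,
          show n + (j + 2) = n + (j + 1) + 1 by omega,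
          show n + 1 + j = n + (j + 1) by omega]
      exact h
    have hlim : (1 + l) * L (j + 1) ≤ (1 - l) * L (j + 1) + l * (L (j + 2) + L j) := by
      refine le_of_tendsto_of_tendsto'
        ((hDL1 (j + 1)).const_mul (1 + l))
        (((hDL (j + 1)).const_mul (1 - l)).add
          (((hDL (j + 2)).add (hDL1 j)).const_mul l)) (fun n => key n)
    have h2 : l * (2 * L (j + 1)) ≤ l * (L (j + 2) + L j) := by nlinarith
    exact (mul_le_mul_iff_right₀ hl0).mp h2
  have hlow : ∀ j, L 1 + L j ≤ L (j + 1) := by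
    intro j
    induction j with
    | zero => rw [hL0]; simp
    | succ j ih => have := hconv j; linarith
  have hLk : ∀ j : ℕ, L j = j * L 1 := by
    intro j
    induction j with
    | zero => simp [hL0]
    | succ j ih =>
      have h1 := hCsub j
      have h2 := hlow j
      push_cast
      push_cast at ih
      linarith
  -- the subadditive sequence a n = dist (T^[n] x) x
  set a : ℕ → ℝ := fun n => dist (T^[n] x) x with hA
  have ha : Subadditive a := by
    intro m n
    simp only [hA]
    calc dist (T^[m + n] x) x ≤ dist (T^[m + n] x) (T^[n] x) + dist (T^[n] x) x :=
          dist_triangle _ _ _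
      _ ≤ dist (T^[m] x) x + dist (T^[n] x) x := by
          have e : T^[m + n] x = T^[n] (T^[m] x) := by
            rw [show m + n = n + m by omega, Function.iterate_add_apply]
          rw [e]
          exact add_le_add (hneI n _ (hxC m) _ hx) le_rfl
  have hbdd : BddBelow (Set.range fun n : ℕ => a n / n) := by
    refine ⟨0, ?_⟩
    rintro y ⟨n, rfl⟩
    positivity
  have htρ := ha.tendsto_lim hbdd
  have hSne : S.Nonempty := by
    obtain ⟨y, hy⟩ := hne
    exact ⟨dist y (T y), y, hy, rfl⟩
  have hSbd : BddBelow S := by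
    refine ⟨0, ?_⟩
    rintro s ⟨y, hy, rfl⟩
    exact dist_nonneg
  -- sInf S ≤ L 1
  have hE1 : sInf S ≤ L 1 := by
    simp only [hL]
    refine le_ciInf (fun n => csInf_le hSbd ?_)
    refine ⟨T^[n] x, hxC n, ?_⟩
    simp only [hD]
    rw [Function.iterate_succ_apply' T n x, dist_comm]
  -- L 1 ≤ ρ
  have hE2 : L 1 ≤ ha.lim := by
    rw [Subadditive.lim]
    refine le_csInf ⟨a 1 / (1:ℕ), 1, Set.self_mem_Ici, rfl⟩ ?_
    rintro b ⟨n, hn, rfl⟩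
    have hn0 : (0:ℝ) < n := by exact_mod_cast Nat.lt_of_lt_of_le Nat.zero_lt_one hn
    rw [le_div_iff₀ hn0]
    have h1 : L 1 * n = L n := by rw [hLk n]; ring
    rw [h1]
    have h2 : L n ≤ D n 0 := by
      simp only [hL]
      exact ciInf_le ⟨0, by rintro y ⟨m, rfl⟩; exact dist_nonneg⟩ 0
    have h3 : D n 0 = a n := by simp [hD, hA]
    linarith
  -- ρ ≤ sInf S
  have hE3 : ha.lim ≤ sInf S := by
    refine le_csInf hSne ?_
    rintro s ⟨y, hy, rfl⟩
    have hby : ∀ n : ℕ, dist (T^[n] y) y ≤ n * dist y (T y) := by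
      intro n
      induction n with
      | zero => simp
      | succ n ih =>
        have e : T^[n + 1] y = T^[n] (T y) := Function.iterate_succ_apply T n y
        have h1 : dist (T^[n + 1] y) (T^[n] y) ≤ dist y (T y) := by
          rw [e, dist_comm y (T y)]
          exact hneI n _ (hTC hy) _ hy
        have h2 := dist_triangle (T^[n + 1] y) (T^[n] y) y
        push_cast
        linarith
    have key : ∀ n : ℕ, 1 ≤ n → ha.lim ≤ (2 * dist x y) / n + dist y (T y) := by
      intro n hn
      have hn0 : (0:ℝ) < n := by exact_mod_cast Nat.lt_of_lt_of_le Nat.zero_lt_one hn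
      have hρn : ha.lim ≤ a n / n := ha.lim_le_div hbdd (by omega)
      have h1 : a n ≤ 2 * dist x y + n * dist y (T y) := by
        simp only [hA]
        have t1 := dist_triangle (T^[n] x) (T^[n] y) y
        have t2 := dist_triangle (T^[n] x) y x
        have t3 : dist (T^[n] x) (T^[n] y) ≤ dist x y := hneI n _ hx _ hy
        have t4 := hby n
        have t5 : dist y x = dist x y := dist_comm _ _
        calc dist (T^[n] x) x ≤ dist (T^[n] x) y + dist y x := dist_triangle _ _ _
          _ ≤ (dist (T^[n] x) (T^[n] y) + dist (T^[n] y) y) + dist y x := by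
              have := dist_triangle (T^[n] x) (T^[n] y) y; linarith
          _ ≤ 2 * dist x y + n * dist y (T y) := by rw [t5]; linarith
      have h2 : a n / n ≤ (2 * dist x y + n * dist y (T y)) / n := by
        apply div_le_div_of_nonneg_right h1 hn0.le
      have h3 : (2 * dist x y + n * dist y (T y)) / n = (2 * dist x y) / n + dist y (T y) := by
        field_simp
      linarith
    have hlim : Filter.Tendsto (fun n : ℕ => (2 * dist x y) / n + dist y (T y))
        Filter.atTop (nhds (0 + dist y (T y))) :=
      (tendsto_const_div_atTop_nhds_zero_nat _).add tendsto_const_nhds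
    have := ge_of_tendsto hlim (Filter.eventually_atTop.2 ⟨1, key⟩)
    linarith
  have hEqL1 : L 1 = sInf S := le_antisymm (hE2.trans hE3) hE1
  have hEqρ : ha.lim = sInf S := le_antisymm hE3 (hE1.trans hE2)
  have hk0 : (k:ℝ) ≠ 0 := Nat.cast_ne_zero.2 (by omega)
  refine ⟨?_, ?_, ?_⟩
  · rw [← hEqL1]
    have g := hDL 1
    refine g.congr (fun n => ?_)
    simp [hD]
  · have g := (hDL k).const_mul (1 / (k:ℝ))
    have e : (1 / (k:ℝ)) * L k = sInf S := by
      rw [hLk k, ← hEqL1]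
      field_simp
    rw [e] at g
    refine g.congr (fun n => ?_)
    simp [hD]
  · rw [← hEqρ]
    refine htρ.congr (fun n => ?_)
    simp [hA]
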